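/- A weighted median of proxy positions, with weights induced by nearest-proxy delegation, always equals the report of the proxy to whom the median voter delegates: letting i* be the median voter of the combined profile (s, p|_N) with m+n odd, the proxy \varphi_{i*}(s) has total weight strictly greater than the sum of weights of proxies strictly on the far side of it, on each side; hence its position is a weighted median. -/
import Mathlib


/-- `x` is a median of the multiset `P`. -/
def IsMedian (P : Multiset ℝ) (x : ℝ) : Prop :=
  x ∈ P ∧ 2 * (P.filter (fun y => y < x)).card ≤ P.card ∧
    2 * (P.filter (fun y => x < y)).card ≤ P.card

/-- The combined multiset of positions of proxies and followers. -/
def combined {m n : ℕ} (s : Fin m → ℝ) (p : Fin n → ℝ) : Multiset ℝ :=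
  Finset.univ.val.map s + Finset.univ.val.map p

/-- The weight of proxy `k`: itself plus the followers delegating to it. -/
def weight {m n : ℕ} (φ : Fin n → Fin m) (k : Fin m) : ℕ :=
  1 + (Finset.univ.filter (fun i : Fin n => φ i = k)).card


lemma sum_weight_filter {m n : ℕ} (φ : Fin n → Fin m) (A : Finset (Fin m)) :
    ∑ k ∈ A, weight φ k
      = A.card + (Finset.univ.filter (fun i => φ i ∈ A)).card := by
  unfold weight
  rw [Finset.sum_add_distrib, Finset.sum_const, smul_eq_mul, mul_one]
  congr 1
  rw [Finset.card_eq_sum_card_fiberwise (f := φ)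
    (s := Finset.univ.filter (fun i => φ i ∈ A)) (t := A)
    (fun x hx => (Finset.mem_filter.mp hx).2)]
  apply Finset.sum_congr rfl
  intro k hk
  congr 1
  rw [Finset.filter_filter]
  apply Finset.filter_congr
  intro i _
  exact ⟨fun h => ⟨h ▸ hk, h⟩, And.right⟩

lemma combined_filter_card {m n : ℕ} (s : Fin m → ℝ) (p : Fin n → ℝ)
    (q : ℝ → Prop) [DecidablePred q] :
    ((combined s p).filter q).card
      = (Finset.univ.filter (fun k => q (s k))).card
        + (Finset.univ.filter (fun i => q (p i))).card := by
  unfold combined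
  rw [Multiset.filter_add, Multiset.card_add]
  congr 1 <;> · rw [Multiset.filter_map, Multiset.card_map]; rfl

lemma combined_card {m n : ℕ} (s : Fin m → ℝ) (p : Fin n → ℝ) :
    (combined s p).card = m + n := by
  unfold combined; simp

lemma sum_weight_total {m n : ℕ} (φ : Fin n → Fin m) :
    ∑ k : Fin m, weight φ k = m + n := by
  simpa using sum_weight_filter φ Finset.univ

/-- With weights induced by nearest-proxy delegation, the report of the proxy
nearest the median voter of the combined profile (the proxy to whom the median
voter delegates) is always a weighted median of the proxy reports: on each side,
the total weight of proxies strictly beyond it is at most half the total weight. -/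
theorem median_voter_proxy_is_weighted_median {m n : ℕ} (hodd : Odd (m + n))
    (s : Fin m → ℝ) (p : Fin n → ℝ) (hs : Function.Injective s)
    (φ : Fin n → Fin m)
    (hφ : ∀ i k, k ≠ φ i → |s (φ i) - p i| < |s k - p i|)
    (μ : ℝ) (hμ : IsMedian (combined s p) μ)
    (j0 : Fin m) (hj0 : ∀ k ≠ j0, |s j0 - μ| < |s k - μ|) :
    2 * (∑ k ∈ Finset.univ.filter (fun k => s k < s j0), weight φ k) ≤
        (∑ k : Fin m, weight φ k) ∧
    2 * (∑ k ∈ Finset.univ.filter (fun k => s j0 < s k), weight φ k) ≤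
        (∑ k : Fin m, weight φ k) := by
  obtain ⟨hμmem, hlt, hgt⟩ := hμ
  have sq_of : ∀ a b : ℝ, |a| < |b| → a * a < b * b := by
    intro a b h
    have := mul_self_lt_mul_self (abs_nonneg a) h
    rwa [abs_mul_abs_self, abs_mul_abs_self] at this
  constructor
  · set A := Finset.univ.filter (fun k => s k < s j0) with hA
    have h1 : A.card ≤ (Finset.univ.filter (fun k => s k < μ)).card := by
      apply Finset.card_le_card
      intro k hk
      simp only [hA, Finset.mem_filter, Finset.mem_univ, true_and] at hk ⊢
      have hne : k ≠ j0 := fun h => by rw [h] at hk; exact lt_irrefl _ hk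
      have := sq_of _ _ (hj0 k hne)
      nlinarith
    have h2 : (Finset.univ.filter (fun i => φ i ∈ A)).card
        ≤ (Finset.univ.filter (fun i => p i < μ)).card := by
      apply Finset.card_le_card
      intro i hi
      simp only [hA, Finset.mem_filter, Finset.mem_univ, true_and] at hi ⊢
      have hne : φ i ≠ j0 := fun h => by rw [h] at hi; exact lt_irrefl _ hi
      have ha := sq_of _ _ (hj0 (φ i) hne)
      have hb := sq_of _ _ (hφ i j0 (Ne.symm hne))
      nlinarith
    rw [sum_weight_filter, sum_weight_total]
    have h3 := combined_filter_card s p (fun y => y < μ)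
    have h4 := combined_card s p
    rw [h4, h3] at hlt
    omega
  · set A := Finset.univ.filter (fun k => s j0 < s k) with hA
    have h1 : A.card ≤ (Finset.univ.filter (fun k => μ < s k)).card := by
      apply Finset.card_le_card
      intro k hk
      simp only [hA, Finset.mem_filter, Finset.mem_univ, true_and] at hk ⊢
      have hne : k ≠ j0 := fun h => by rw [h] at hk; exact lt_irrefl _ hk
      have := sq_of _ _ (hj0 k hne)
      nlinarith
    have h2 : (Finset.univ.filter (fun i => φ i ∈ A)).card
        ≤ (Finset.univ.filter (fun i => μ < p i)).card := by
      apply Finset.card_le_card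
      intro i hi
      simp only [hA, Finset.mem_filter, Finset.mem_univ, true_and] at hi ⊢
      have hne : φ i ≠ j0 := fun h => by rw [h] at hi; exact lt_irrefl _ hi
      have ha := sq_of _ _ (hj0 (φ i) hne)
      have hb := sq_of _ _ (hφ i j0 (Ne.symm hne))
      nlinarith
    rw [sum_weight_filter, sum_weight_total]
    have h3 := combined_filter_card s p (fun y => μ < y)
    have h4 := combined_card s p
    rw [h4, h3] at hgt
    omega
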